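/- Suppose a probability measure $\hat{G}$ on $\mathbb{R}^d$ satisfies $\frac{1}{n}\sum_{i=1}^n\log f_{\hat G,\Sigma_i}(X_i) \ge \sup_{G}\frac{1}{n}\sum_{i=1}^n\log f_{G,\Sigma_i}(X_i) - q$ for some $q > 0$, where the supremum is over all probability measures on $\mathbb{R}^d$. Then for every $j \in \{1,\dots,n\}$, $f_{\hat G,\Sigma_j}(X_j) \ge e^{-nq - \log n}\cdot\frac{1}{e\sqrt{\det(2\pi\Sigma_j)}}$. -/

import Mathlib

open MeasureTheory Matrix Finset

noncomputable def gaussDensity {d : ℕ} (S : Matrix (Fin d) (Fin d) ℝ)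
    (x : Fin d → ℝ) : ℝ :=
  (Real.sqrt ((2 * Real.pi) ^ d * S.det))⁻¹ *
    Real.exp (-(1 / 2) * (x ⬝ᵥ S⁻¹.mulVec x))

noncomputable def mixDensity {d : ℕ} (G : Measure (Fin d → ℝ))
    (S : Matrix (Fin d) (Fin d) ℝ) (x : Fin d → ℝ) : ℝ :=
  ∫ θ, gaussDensity S (x - θ) ∂G

lemma sqrt_const_pos {d : ℕ} {S : Matrix (Fin d) (Fin d) ℝ} (hS : S.PosDef) :
    0 < Real.sqrt ((2 * Real.pi) ^ d * S.det) :=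
  Real.sqrt_pos.2 (mul_pos (pow_pos (by positivity) d) hS.det_pos)

lemma gauss_pos {d : ℕ} {S : Matrix (Fin d) (Fin d) ℝ} (hS : S.PosDef)
    (x : Fin d → ℝ) : 0 < gaussDensity S x :=
  mul_pos (inv_pos.2 (sqrt_const_pos hS)) (Real.exp_pos _)

lemma gauss_le {d : ℕ} {S : Matrix (Fin d) (Fin d) ℝ} (hS : S.PosDef)
    (x : Fin d → ℝ) :
    gaussDensity S x ≤ (Real.sqrt ((2 * Real.pi) ^ d * S.det))⁻¹ := by
  have hQ : 0 ≤ x ⬝ᵥ S⁻¹.mulVec x := by simpa using hS.inv.posSemidef.dotProduct_mulVec_nonneg x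
  have hexp : Real.exp (-(1 / 2) * (x ⬝ᵥ S⁻¹.mulVec x)) ≤ 1 :=
    Real.exp_le_one_iff.2 (by nlinarith)
  calc gaussDensity S x
      ≤ (Real.sqrt ((2 * Real.pi) ^ d * S.det))⁻¹ * 1 :=
        mul_le_mul_of_nonneg_left hexp (inv_pos.2 (sqrt_const_pos hS)).le
    _ = _ := mul_one _

lemma gauss_cont {d : ℕ} (S : Matrix (Fin d) (Fin d) ℝ) (x0 : Fin d → ℝ) :
    Continuous fun θ : Fin d → ℝ => gaussDensity S (x0 - θ) := by
  unfold gaussDensity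
  simp only [dotProduct, Matrix.mulVec, dotProduct]
  fun_prop

lemma gauss_integrable {d : ℕ} {S : Matrix (Fin d) (Fin d) ℝ} (hS : S.PosDef)
    (x0 : Fin d → ℝ) (μ : Measure (Fin d → ℝ)) [IsProbabilityMeasure μ] :
    Integrable (fun θ => gaussDensity S (x0 - θ)) μ := by
  refine Integrable.mono' (integrable_const
    ((Real.sqrt ((2 * Real.pi) ^ d * S.det))⁻¹))
    (gauss_cont S x0).aestronglyMeasurable (ae_of_all _ fun θ => ?_)
  rw [Real.norm_of_nonneg (gauss_pos hS _).le]
  exact gauss_le hS _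

lemma mix_pos {d : ℕ} {S : Matrix (Fin d) (Fin d) ℝ} (hS : S.PosDef)
    (x0 : Fin d → ℝ) (μ : Measure (Fin d → ℝ)) [IsProbabilityMeasure μ] :
    0 < mixDensity μ S x0 := by
  rw [mixDensity]
  rw [integral_pos_iff_support_of_nonneg (fun θ => (gauss_pos hS _).le)
    (gauss_integrable hS x0 μ)]
  have hsupp : Function.support (fun θ => gaussDensity S (x0 - θ)) = Set.univ :=
    Set.eq_univ_of_forall fun θ => (gauss_pos hS _).ne'
  rw [hsupp]
  simp

/-- An approximate NPMLE (within `q` of the optimal average log-likelihood)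
has fitted likelihood values bounded below:
`f_{Ĝ,Σⱼ}(Xⱼ) ≥ e^{-nq - log n} / (e √(det 2πΣⱼ))`. -/
theorem approximate_npmle_likelihood_lower_bound {d n : ℕ} (hn : 0 < n)
    (X : Fin n → (Fin d → ℝ))
    (Sig : Fin n → Matrix (Fin d) (Fin d) ℝ)
    (hpd : ∀ i, (Sig i).PosDef)
    (Ghat : Measure (Fin d → ℝ)) [IsProbabilityMeasure Ghat]
    (q : ℝ) (hq : 0 < q)
    (happrox : ∀ (G : Measure (Fin d → ℝ)), IsProbabilityMeasure G →
      (1 / (n : ℝ)) * ∑ i, Real.log (mixDensity G (Sig i) (X i))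
        ≤ (1 / (n : ℝ)) * ∑ i, Real.log (mixDensity Ghat (Sig i) (X i)) + q) :
    ∀ j : Fin n,
      mixDensity Ghat (Sig j) (X j)
        ≥ Real.exp (-(n * q) - Real.log n) *
            (1 / (Real.exp 1 * Real.sqrt ((2 * Real.pi) ^ d * (Sig j).det))) := by
  intro j
  have hn' : (0 : ℝ) < n := Nat.cast_pos.2 hn
  have hn1 : (1 : ℝ) ≤ n := by exact_mod_cast hn
  set c : ℝ := Real.sqrt ((2 * Real.pi) ^ d * (Sig j).det) with hc
  have hcpos : 0 < c := sqrt_const_pos (hpd j)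
  -- the competitor mixture
  set a : ENNReal := (n : ENNReal)⁻¹ with ha
  have ha1 : a ≤ 1 := ENNReal.inv_le_one.2 (by exact_mod_cast hn)
  have hane : a ≠ ⊤ := by
    simp [ha, ENNReal.inv_ne_top]
    exact_mod_cast hn.ne'
  set G : Measure (Fin d → ℝ) :=
    a • Measure.dirac (X j) + (1 - a) • Ghat with hG
  haveI hGprob : IsProbabilityMeasure G := by
    constructor
    rw [hG]
    simp only [Measure.add_apply, Measure.smul_apply, smul_eq_mul,
      Measure.dirac_apply_of_mem (Set.mem_univ _), measure_univ, mul_one]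
    exact add_tsub_cancel_of_le ha1
  have haR : a.toReal = (n : ℝ)⁻¹ := by
    rw [ha, ENNReal.toReal_inv]; simp
  have hbR : (1 - a).toReal = 1 - (n : ℝ)⁻¹ := by
    rw [ENNReal.toReal_sub_of_le ha1 (by simp), haR]; simp
  have hninv_pos : (0 : ℝ) < (n : ℝ)⁻¹ := inv_pos.2 hn'
  have hb_nonneg : (0 : ℝ) ≤ 1 - (n : ℝ)⁻¹ := by
    have h := mul_inv_cancel₀ hn'.ne'
    nlinarith
  -- the mixture density of G
  have hGmix : ∀ i, mixDensity G (Sig i) (X i) =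
      (n : ℝ)⁻¹ * gaussDensity (Sig i) (X i - X j)
        + (1 - (n : ℝ)⁻¹) * mixDensity Ghat (Sig i) (X i) := by
    intro i
    rw [mixDensity, hG, integral_add_measure
      ((gauss_integrable (hpd i) (X i) (Measure.dirac (X j))).smul_measure hane)
      ((gauss_integrable (hpd i) (X i) Ghat).smul_measure
        (by simp [ENNReal.sub_ne_top]))]
    rw [integral_smul_measure, integral_smul_measure, integral_dirac, haR, hbR,
      smul_eq_mul, smul_eq_mul]
    rfl
  -- positivity of the fitted densities
  have hmixpos : ∀ i, 0 < mixDensity Ghat (Sig i) (X i) :=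
    fun i => mix_pos (hpd i) (X i) Ghat
  -- notation
  set L : Fin n → ℝ := fun i => Real.log (mixDensity Ghat (Sig i) (X i)) with hL
  set M : Fin n → ℝ := fun i => Real.log (mixDensity G (Sig i) (X i)) with hM
  -- the approximation hypothesis, multiplied by n
  have hsum : ∑ i, M i ≤ ∑ i, L i + n * q := by
    have h := happrox G hGprob
    calc ∑ i, M i = (n : ℝ) * ((1 / n) * ∑ i, M i) := by field_simp
      _ ≤ (n : ℝ) * ((1 / n) * ∑ i, L i + q) :=
          mul_le_mul_of_nonneg_left h hn'.le
      _ = ∑ i, L i + n * q := by field_simp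
  -- lower bound for M j
  have hMj : Real.log ((n : ℝ)⁻¹ * c⁻¹) ≤ M j := by
    have hgauss0 : gaussDensity (Sig j) (X j - X j) = c⁻¹ := by
      rw [sub_self, gaussDensity]
      simp [zero_dotProduct, hc]
    have hle : (n : ℝ)⁻¹ * c⁻¹ ≤ mixDensity G (Sig j) (X j) := by
      rw [hGmix j, hgauss0]
      nlinarith [mul_nonneg hb_nonneg (hmixpos j).le]
    exact Real.log_le_log (by positivity) hle
  -- lower bound for M i, i ≠ j
  have hMi : ∀ i ∈ ({j}ᶜ : Finset (Fin n)),
      Real.log (1 - (n : ℝ)⁻¹) + L i ≤ M i := by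
    intro i hi
    have hij : i ≠ j := by simpa using hi
    have h2n : 2 ≤ n := by
      have h1 := i.2; have h2 := j.2
      have : i.1 ≠ j.1 := Fin.val_ne_of_ne hij
      omega
    have h2n' : (2 : ℝ) ≤ n := by exact_mod_cast h2n
    have hb_pos : (0 : ℝ) < 1 - (n : ℝ)⁻¹ := by
      have : (n : ℝ)⁻¹ ≤ 2⁻¹ := by
        apply inv_anti₀ <;> linarith
      linarith
    have hle : (1 - (n : ℝ)⁻¹) * mixDensity Ghat (Sig i) (X i)
        ≤ mixDensity G (Sig i) (X i) := by
      rw [hGmix i]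
      nlinarith [mul_nonneg hninv_pos.le (gauss_pos (hpd i) (X i - X j)).le]
    have := Real.log_le_log (mul_pos hb_pos (hmixpos i)) hle
    rwa [Real.log_mul hb_pos.ne' (hmixpos i).ne'] at this
  -- assemble
  have hcard : (({j}ᶜ : Finset (Fin n)).card : ℝ) = (n : ℝ) - 1 := by
    rw [Finset.card_compl]
    simp only [Finset.card_singleton, Fintype.card_fin]
    rw [Nat.cast_sub hn]
    simp
  have hsumM : Real.log ((n : ℝ)⁻¹ * c⁻¹)
      + (((n : ℝ) - 1) * Real.log (1 - (n : ℝ)⁻¹) + ∑ i ∈ ({j}ᶜ : Finset (Fin n)), L i)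
      ≤ ∑ i, M i := by
    rw [Fintype.sum_eq_add_sum_compl j M]
    have h1 : ∑ i ∈ ({j}ᶜ : Finset (Fin n)), (Real.log (1 - (n : ℝ)⁻¹) + L i)
        ≤ ∑ i ∈ ({j}ᶜ : Finset (Fin n)), M i := Finset.sum_le_sum hMi
    rw [Finset.sum_add_distrib, Finset.sum_const, nsmul_eq_mul] at h1
    rw [← hcard]
    linarith
  have hsumL : ∑ i, L i = L j + ∑ i ∈ ({j}ᶜ : Finset (Fin n)), L i :=
    Fintype.sum_eq_add_sum_compl j L
  -- the (1-1/n)^{n-1} ≥ e⁻¹ bound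
  have hone : -1 ≤ ((n : ℝ) - 1) * Real.log (1 - (n : ℝ)⁻¹) := by
    rcases eq_or_lt_of_le hn1 with h1 | h1
    · rw [← h1]; simp
    · set m : ℝ := (n : ℝ) - 1 with hm
      have hmpos : 0 < m := by rw [hm]; linarith
      have hexp : Real.exp (-(m⁻¹)) ≤ 1 - (n : ℝ)⁻¹ := by
        have h2 : m⁻¹ + 1 ≤ Real.exp m⁻¹ := Real.add_one_le_exp _
        have hb_pos : (0 : ℝ) < 1 - (n : ℝ)⁻¹ := by
          have h := mul_inv_cancel₀ hn'.ne'
          nlinarith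
        have h3 : (1 : ℝ) ≤ (1 - (n : ℝ)⁻¹) * Real.exp m⁻¹ := by
          have heq : (1 - (n : ℝ)⁻¹) * (m⁻¹ + 1) = 1 := by
            rw [hm]
            field_simp; ring
          calc (1 : ℝ) = (1 - (n : ℝ)⁻¹) * (m⁻¹ + 1) := heq.symm
            _ ≤ (1 - (n : ℝ)⁻¹) * Real.exp m⁻¹ :=
                mul_le_mul_of_nonneg_left h2 hb_pos.le
        rw [Real.exp_neg]
        have he : (0 : ℝ) < Real.exp m⁻¹ := Real.exp_pos _
        have h4 := mul_inv_cancel₀ he.ne'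
        nlinarith [mul_nonneg (inv_nonneg.2 he.le)
          (by linarith : (0:ℝ) ≤ (1 - (n : ℝ)⁻¹) * Real.exp m⁻¹ - 1)]
      have hlog : -(m⁻¹) ≤ Real.log (1 - (n : ℝ)⁻¹) := by
        have := Real.log_le_log (Real.exp_pos _) hexp
        rwa [Real.log_exp] at this
      have := mul_le_mul_of_nonneg_left hlog hmpos.le
      calc (-1 : ℝ) = m * (-(m⁻¹)) := by field_simp
        _ ≤ m * Real.log (1 - (n : ℝ)⁻¹) := this
  -- conclude on L j
  have hLj : Real.log ((n : ℝ)⁻¹ * c⁻¹) - 1 - n * q ≤ L j := by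
    have := hsum
    rw [hsumL] at this
    linarith [hsumM, hone]
  -- convert to the stated bound
  have hfinal : Real.exp (Real.log ((n : ℝ)⁻¹ * c⁻¹) - 1 - n * q)
      = Real.exp (-(n * q) - Real.log n) * (1 / (Real.exp 1 * c)) := by
    rw [Real.log_mul (by positivity) (by positivity), Real.log_inv, Real.log_inv]
    rw [show -Real.log n + -Real.log c - 1 - n * q
        = (-(n * q) - Real.log n) + (-1 + -Real.log c) from by ring]
    rw [Real.exp_add, Real.exp_add, Real.exp_neg, Real.exp_neg, Real.exp_log hcpos]
    rw [one_div, mul_inv]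
  have := Real.exp_le_exp.2 hLj
  rw [hfinal, hL] at this
  simp only at this
  rw [Real.exp_log (hmixpos j)] at this
  exact this
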